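/- For every r ∈ (0, π/3], the open r-neighborhood B_r(S¹, E(S¹)) = {f ∈ E(S¹) : ∃ θ ∈ S¹, f(θ) < r}, equipped with the subspace topology inherited from E(S¹), is homotopy equivalent to S¹; in fact, the Kuratowski image of S¹ is a deformation retract of B_r(S¹, E(S¹)). -/

import Mathlib

noncomputable section

/-- The circle `ℝ/2πℤ` with the quotient metric (geodesic metric, circumference `2π`). -/
abbrev S1 : Type := AddCircle (2 * Real.pi)

instance : Fact (0 < 2 * Real.pi) := ⟨by positivity⟩

/-- The open `r`-neighborhood `B_r(S¹, E(S¹))` of the Kuratowski image of `S¹` in the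
tight span `E(S¹) = {f : 1-Lipschitz, f θ + f (θ+π) = π} ⊆ C(S¹, ℝ)` (sup metric). -/
def nbhd (r : ℝ) : Set C(S1, ℝ) :=
  {f | (LipschitzWith 1 ⇑f ∧ ∀ θ : S1, f θ + f (θ + ((Real.pi : ℝ) : S1)) = Real.pi) ∧
    ∃ θ : S1, f θ < r}

namespace NB
open Real Complex intervalIntegral MeasureTheory

lemma two_pi_pos : (0:ℝ) < 2 * π := by positivity

lemma norm_coe_eq {x : ℝ} (hx : |x| ≤ π) : ‖(x : S1)‖ = |x| :=
  (AddCircle.norm_coe_eq_abs_iff (2*π) (by positivity)).2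
    (by rwa [_root_.abs_of_pos two_pi_pos, mul_div_cancel_left₀ _ (two_ne_zero)])

lemma norm_le_pi (ξ : S1) : ‖ξ‖ ≤ π := by
  have := AddCircle.norm_le_half_period (p := 2*π) (x := ξ) (by positivity)
  rwa [_root_.abs_of_pos two_pi_pos, mul_div_cancel_left₀ _ (two_ne_zero)] at this

lemma norm_coe_le (x : ℝ) : ‖(x : S1)‖ ≤ |x| := by
  rcases le_or_gt |x| π with h | h
  · exact (norm_coe_eq h).le
  · exact (norm_le_pi _).trans h.le

lemma exists_rep (ξ : S1) (a : ℝ) : ∃ x : ℝ, ξ = (x : S1) ∧ x ∈ Set.Ioc a (a + 2*π) := by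
  rcases (AddCircle.equivIoc (2*π) a).symm.surjective ξ with ⟨⟨x, hx⟩, rfl⟩
  exact ⟨x, rfl, hx⟩

lemma dist_eq_norm' (u v : S1) : dist u v = ‖u - v‖ := dist_eq_norm u v

lemma antipode_norm (ξ : S1) : ‖ξ + ((π:ℝ) : S1)‖ = π - ‖ξ‖ := by
  obtain ⟨x, rfl, hx⟩ := exists_rep ξ (-π)
  rw [show (-π) + 2*π = π by ring] at hx
  have hx1 : |x| ≤ π := by
    rw [abs_le]; exact ⟨hx.1.le, hx.2⟩
  rw [norm_coe_eq hx1, ← AddCircle.coe_add]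
  rcases le_or_gt x 0 with h | h
  · have : |x + π| ≤ π := by rw [abs_le]; constructor <;> [linarith [hx.1.le]; linarith]
    rw [norm_coe_eq this, _root_.abs_of_nonneg (by linarith [hx.1.le]), _root_.abs_of_nonpos h]; ring
  · have he : ((x + π : ℝ) : S1) = ((x - π : ℝ) : S1) := by
      rw [show x + π = (x - π) + 2*π by ring, AddCircle.coe_add_period]
    have : |x - π| ≤ π := by rw [abs_le]; constructor <;> [linarith; linarith [hx.2]]
    rw [he, norm_coe_eq this, _root_.abs_of_nonpos (by linarith [hx.2]), _root_.abs_of_pos h]; ring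

lemma dist_antipode (u v : S1) : dist u (v + ((π:ℝ) : S1)) = π - dist u v := by
  have h2 : ((π:ℝ):S1) + ((π:ℝ):S1) = 0 := by
    rw [← AddCircle.coe_add, show π + π = 2*π by ring, AddCircle.coe_period]
  have hneg : -((π:ℝ):S1) = ((π:ℝ):S1) := neg_eq_of_add_eq_zero_left h2
  have h1 : u - (v + ((π:ℝ):S1)) = (u - v) + ((π:ℝ):S1) := by
    rw [sub_add_eq_sub_sub, sub_eq_add_neg (u-v), hneg]
  rw [dist_eq_norm', dist_eq_norm', h1, antipode_norm]

lemma dist_le_pi (u v : S1) : dist u v ≤ π := by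
  have := dist_antipode u v
  have h2 := dist_nonneg (x := u) (y := v + ((π:ℝ):S1))
  linarith

lemma dist_coe_le (x y : ℝ) : dist (x : S1) (y : S1) ≤ |x - y| := by
  rw [dist_eq_norm', ← AddCircle.coe_sub]; exact norm_coe_le _

lemma dist_coe_eq {x y : ℝ} (h : |x - y| ≤ π) : dist (x : S1) (y : S1) = |x - y| := by
  rw [dist_eq_norm', ← AddCircle.coe_sub]; exact norm_coe_eq h

lemma norm_coe_form (x : ℝ) : ‖(x : S1)‖ = |x - round ((2*π)⁻¹ * x) * (2*π)| :=
  AddCircle.norm_eq (p := 2*π)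

/-- From small norm, a nearby integer translate. -/
lemma exists_translate {x : ℝ} {d : ℝ} (h : ‖(x : S1)‖ ≤ d) :
    ∃ k : ℤ, |x - 2*π*k| ≤ d := by
  refine ⟨round ((2*π)⁻¹ * x), ?_⟩
  have := norm_coe_form x
  rw [this] at h
  convert h using 2; ring


def argS1 (z : ℂ) : S1 := ((Complex.arg z : ℝ) : S1)

lemma abs_arg_le {P Q R : ℝ} (hP : 0 < P) (hR0 : 0 ≤ R) (hR : R < π/2)
    (hQ : |Q| ≤ Real.tan R * P) : |Complex.arg ((P:ℂ) + (Q:ℂ) * Complex.I)| ≤ R := by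
  set z : ℂ := (P:ℂ) + (Q:ℂ) * Complex.I with hzdef
  have hre : z.re = P := by simp [hzdef]
  have him : z.im = Q := by simp [hzdef]
  have habs : 0 < ‖z‖ := by
    have : z ≠ 0 := fun h => by rw [h] at hre; simp at hre; linarith
    exact norm_pos_iff.mpr this
  have hsin : 0 ≤ Real.sin R := Real.sin_nonneg_of_nonneg_of_le_pi hR0 (by linarith [Real.pi_pos])
  have hcos : 0 < Real.cos R := Real.cos_pos_of_mem_Ioo ⟨by linarith, hR⟩
  have h1 : |Q| * Real.cos R ≤ Real.sin R * P := by
    have := mul_le_mul_of_nonneg_right hQ hcos.le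
    rw [Real.tan_eq_sin_div_cos] at this
    calc |Q| * Real.cos R ≤ Real.sin R / Real.cos R * P * Real.cos R := this
      _ = Real.sin R * P := by field_simp
  have h3 : (‖z‖)^2 = P^2 + Q^2 := by
    rw [Complex.sq_norm, Complex.normSq_apply, hre, him]; ring
  have hsq : Q^2 <= (Real.sin R)^2 * (‖z‖)^2 := by
    have hq := mul_le_mul h1 h1 (by positivity) (mul_nonneg hsin hP.le)
    nlinarith [_root_.sq_abs Q, Real.sin_sq_add_cos_sq R]
  have key : |Q| ≤ Real.sin R * ‖z‖ := by
    have h4 : |Q| = Real.sqrt (Q^2) := (Real.sqrt_sq_eq_abs Q).symm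
    have h5 : Real.sin R * ‖z‖ = Real.sqrt ((Real.sin R)^2 * (‖z‖)^2) := by
      rw [Real.sqrt_mul (sq_nonneg _), Real.sqrt_sq hsin, Real.sqrt_sq habs.le]
    rw [h4, h5]; exact Real.sqrt_le_sqrt hsq
  rw [Complex.arg_of_re_nonneg (by rw [hre]; exact hP.le), him]
  have hb1 : Real.arcsin (Q / ‖z‖) ≤ R := by
    have : Q / ‖z‖ ≤ Real.sin R := by
      rw [div_le_iff₀ habs]
      exact (le_abs_self Q).trans (key.trans_eq (by ring))
    calc Real.arcsin (Q / ‖z‖) ≤ Real.arcsin (Real.sin R) := Real.monotone_arcsin this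
      _ = R := Real.arcsin_sin (by linarith) (by linarith)
  have hb2 : -R ≤ Real.arcsin (Q / ‖z‖) := by
    have : -Real.sin R ≤ Q / ‖z‖ := by
      rw [neg_le, ← neg_div, div_le_iff₀ habs]
      exact (le_abs_self (-Q)).trans_eq (abs_neg Q) |>.trans (key.trans_eq (by ring))
    calc -R = Real.arcsin (Real.sin (-R)) := by
          rw [Real.arcsin_sin (by linarith) (by linarith)]
      _ ≤ Real.arcsin (Q / ‖z‖) := Real.monotone_arcsin (by rwa [Real.sin_neg])
  rw [abs_le]; exact ⟨hb2, hb1⟩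

lemma argS1_shift {z : ℂ} (hz : z ≠ 0) (c : ℝ) :
    argS1 z = ((c + Complex.arg (Complex.exp (-(c:ℂ) * Complex.I) * z) : ℝ) : S1) := by
  set w := Complex.exp (-(c:ℂ) * Complex.I) * z with hw
  have hwne : w ≠ 0 := mul_ne_zero (Complex.exp_ne_zero _) hz
  have h1 : z = Complex.exp ((c:ℂ) * Complex.I) * w := by
    rw [hw, ← mul_assoc, ← Complex.exp_add, show (c:ℂ)*Complex.I + -(c:ℂ)*Complex.I = 0 by ring,
      Complex.exp_zero, one_mul]
  have h2 : (Complex.arg z : Real.Angle) = ((c : ℝ) : Real.Angle) + (Complex.arg w : Real.Angle) := by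
    conv_lhs => rw [h1]
    rw [Complex.arg_mul_coe_angle (Complex.exp_ne_zero _) hwne]
    congr 1
    have he : Complex.exp ((c:ℂ) * Complex.I)
        = (Real.Angle.cos (c : Real.Angle) : ℂ) + (Real.Angle.sin (c : Real.Angle) : ℂ) * Complex.I := by
      rw [Complex.exp_mul_I, Real.Angle.cos_coe, Real.Angle.sin_coe, Complex.ofReal_cos,
        Complex.ofReal_sin]
    rw [he, Complex.arg_cos_add_sin_mul_I_coe_angle]
  show ((Complex.arg z : ℝ) : S1) = _
  rw [show ((c + Complex.arg w : ℝ) : S1) = ((c:ℝ):S1) + ((Complex.arg w : ℝ) : S1) by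
    exact_mod_cast AddCircle.coe_add (p := 2*π) c (Complex.arg w)]
  exact h2



variable {W : ℝ → ℝ}

def zI (W : ℝ → ℝ) : ℂ :=
  ((∫ x in (0:ℝ)..2*π, W x * Real.cos x : ℝ) : ℂ) +
    ((∫ x in (0:ℝ)..2*π, W x * Real.sin x : ℝ) : ℂ) * Complex.I

lemma rot (hWc : Continuous W) (hWp : Function.Periodic W (2*π)) (c : ℝ) :
    zI W = Complex.exp ((c:ℂ) * Complex.I) *
      (((∫ x in (c-π)..(c+π), W x * Real.cos (x-c) : ℝ) : ℂ) +
        ((∫ x in (c-π)..(c+π), W x * Real.sin (x-c) : ℝ) : ℂ) * Complex.I) := by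
  set P := (∫ x in (c-π)..(c+π), W x * Real.cos (x-c) : ℝ) with hP
  set Q := (∫ x in (c-π)..(c+π), W x * Real.sin (x-c) : ℝ) with hQ
  have hcont : Continuous (fun x : ℝ => Real.cos (x - c)) :=
    Real.continuous_cos.comp (continuous_id.sub continuous_const)
  have hcont2 : Continuous (fun x : ℝ => Real.sin (x - c)) :=
    Real.continuous_sin.comp (continuous_id.sub continuous_const)
  have hic : ∀ (g : ℝ → ℝ), Continuous g → ∀ a b : ℝ,
      IntervalIntegrable (fun x => W x * g x) volume a b := fun g hg a b =>
    (hWc.mul hg).intervalIntegrable a b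
  have key1 : (∫ x in (0:ℝ)..2*π, W x * Real.cos x : ℝ) = Real.cos c * P - Real.sin c * Q := by
    have h1 : Real.cos c * P - Real.sin c * Q
        = ∫ x in (c-π)..(c+π), (Real.cos c * (W x * Real.cos (x-c)) -
            Real.sin c * (W x * Real.sin (x-c))) := by
      rw [hP, hQ, intervalIntegral.integral_sub ((hic _ hcont _ _).const_mul _)
        ((hic _ hcont2 _ _).const_mul _), intervalIntegral.integral_const_mul,
        intervalIntegral.integral_const_mul]
    have h2 : ∀ x : ℝ, Real.cos c * (W x * Real.cos (x-c)) - Real.sin c * (W x * Real.sin (x-c))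
        = W x * Real.cos x := by
      intro x
      have : Real.cos x = Real.cos (c + (x - c)) := by ring_nf
      rw [this, Real.cos_add]; ring
    rw [h1, intervalIntegral.integral_congr (fun x _ => h2 x)]
    have hper : Function.Periodic (fun x => W x * Real.cos x) (2*π) := fun x => by
      simp [hWp x, Real.cos_add_two_pi]
    have := hper.intervalIntegral_add_eq (c-π) 0
    rw [show c - π + 2*π = c + π by ring, show (0:ℝ) + 2*π = 2*π by ring] at this
    exact this.symm
  have key2 : (∫ x in (0:ℝ)..2*π, W x * Real.sin x : ℝ) = Real.sin c * P + Real.cos c * Q := by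
    have h1 : Real.sin c * P + Real.cos c * Q
        = ∫ x in (c-π)..(c+π), (Real.sin c * (W x * Real.cos (x-c)) +
            Real.cos c * (W x * Real.sin (x-c))) := by
      rw [hP, hQ, intervalIntegral.integral_add ((hic _ hcont _ _).const_mul _)
        ((hic _ hcont2 _ _).const_mul _), intervalIntegral.integral_const_mul,
        intervalIntegral.integral_const_mul]
    have h2 : ∀ x : ℝ, Real.sin c * (W x * Real.cos (x-c)) + Real.cos c * (W x * Real.sin (x-c))
        = W x * Real.sin x := by
      intro x
      have : Real.sin x = Real.sin (c + (x - c)) := by ring_nf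
      rw [this, Real.sin_add]; ring
    rw [h1, intervalIntegral.integral_congr (fun x _ => h2 x)]
    have hper : Function.Periodic (fun x => W x * Real.sin x) (2*π) := fun x => by
      simp [hWp x, Real.sin_add_two_pi]
    have := hper.intervalIntegral_add_eq (c-π) 0
    rw [show c - π + 2*π = c + π by ring, show (0:ℝ) + 2*π = 2*π by ring] at this
    exact this.symm
  rw [zI, key1, key2]
  apply Complex.ext <;>
    simp [Complex.exp_mul_I, Complex.add_re, Complex.add_im, Complex.mul_re, Complex.mul_im] <;>
    ring

lemma cone (hWc : Continuous W) (hWp : Function.Periodic W (2*π)) (hWnn : ∀ x, 0 ≤ W x)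
    {c R : ℝ} (hR0 : 0 ≤ R) (hR : R < π/2)
    (hsupp : ∀ x, c - π ≤ x → x ≤ c + π → 0 < W x → |x - c| ≤ R)
    {x₀ : ℝ} (hx₀l : c - π < x₀) (hx₀r : x₀ < c + π) (hx₀ : 0 < W x₀) :
    zI W ≠ 0 ∧ |Complex.arg (Complex.exp (-(c:ℂ) * Complex.I) * zI W)| ≤ R := by
  set P := (∫ x in (c-π)..(c+π), W x * Real.cos (x-c) : ℝ) with hPdef
  set Q := (∫ x in (c-π)..(c+π), W x * Real.sin (x-c) : ℝ) with hQdef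
  have hcosR : 0 < Real.cos R := Real.cos_pos_of_mem_Ioo ⟨by linarith [Real.pi_pos], hR⟩
  set g : ℝ → ℝ := fun x => W x * Real.cos (x - c) with hgdef
  have hcont : Continuous (fun x : ℝ => Real.cos (x - c)) :=
    Real.continuous_cos.comp (continuous_id.sub continuous_const)
  have hcont2 : Continuous (fun x : ℝ => Real.sin (x - c)) :=
    Real.continuous_sin.comp (continuous_id.sub continuous_const)
  have hgc : Continuous g := hWc.mul hcont
  have hgnn : ∀ x, c - π ≤ x → x ≤ c + π → 0 ≤ g x := by
    intro x hxl hxr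
    rcases (hWnn x).lt_or_eq with hw | hw
    · have hxc : |x - c| ≤ R := hsupp x hxl hxr hw
      have : 0 < Real.cos (x - c) := Real.cos_pos_of_mem_Ioo
        ⟨by cases abs_le.1 hxc; linarith, by cases abs_le.1 hxc; linarith⟩
      positivity
    · simp [hgdef, ← hw]
  -- positivity of P
  have hgx₀ : 0 < g x₀ := by
    have hxc : |x₀ - c| ≤ R := hsupp x₀ hx₀l.le hx₀r.le hx₀
    have : 0 < Real.cos (x₀ - c) := Real.cos_pos_of_mem_Ioo
      ⟨by cases abs_le.1 hxc; linarith, by cases abs_le.1 hxc; linarith⟩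
    positivity
  obtain ⟨δ, hδpos, hδ⟩ := Metric.continuousAt_iff.1 hgc.continuousAt (g x₀ / 2) (by linarith)
  set u := max (c-π) (x₀ - δ/2) with hu
  set v := min (c+π) (x₀ + δ/2) with hv
  have huv : u < v := by
    apply max_lt
    · apply lt_min
      · linarith [Real.pi_pos]
      · linarith
    · apply lt_min
      · linarith
      · linarith
  have hPu : 0 < ∫ x in u..v, g x := by
    apply intervalIntegral_pos_of_pos_on (hgc.intervalIntegrable u v) _ huv
    intro x hx
    have hx1 : x₀ - δ/2 < x := lt_of_le_of_lt (le_max_right (c-π) (x₀ - δ/2)) hx.1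
    have hx2 : x < x₀ + δ/2 := lt_of_lt_of_le hx.2 (min_le_right (c+π) (x₀ + δ/2))
    have h1 : dist x x₀ < δ := by
      rw [Real.dist_eq, abs_lt]; constructor <;> linarith
    have h2 := hδ h1
    rw [Real.dist_eq, abs_lt] at h2
    linarith [h2.1]
  have hP : 0 < P := by
    refine lt_of_lt_of_le hPu ?_
    apply intervalIntegral.integral_mono_interval (le_max_left _ _) huv.le (min_le_left _ _)
    · exact (ae_restrict_iff' measurableSet_Ioc).2 (Filter.Eventually.of_forall
        (fun x hx => hgnn x hx.1.le hx.2))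
    · exact hgc.intervalIntegrable _ _
  -- Q bound
  have hQb : |Q| ≤ Real.tan R * P := by
    have h1 : |Q| ≤ ∫ x in (c-π)..(c+π), |W x * Real.sin (x - c)| := by
      exact intervalIntegral.abs_integral_le_integral_abs (by linarith [Real.pi_pos])
    have h2 : ∀ x ∈ Set.Icc (c-π) (c+π), |W x * Real.sin (x - c)| ≤ Real.tan R * g x := by
      intro x hx
      rcases (hWnn x).lt_or_eq with hw | hw
      · have hxc : |x - c| ≤ R := hsupp x hx.1 hx.2 hw
        have hcosx : 0 < Real.cos (x - c) := Real.cos_pos_of_mem_Ioo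
          ⟨by cases abs_le.1 hxc; linarith, by cases abs_le.1 hxc; linarith⟩
        rw [abs_mul, abs_of_pos hw, hgdef]
        have hsin : |Real.sin (x - c)| ≤ Real.tan R * Real.cos (x - c) := by
          have htan : |Real.tan (x - c)| ≤ Real.tan R := by
            have hmem : x - c ∈ Set.Ioo (-(π/2)) (π/2) := by
              cases' abs_le.1 hxc with ha hb
              exact Set.mem_Ioo.2 ⟨by linarith, by linarith⟩
            have hmemR : R ∈ Set.Ioo (-(π/2)) (π/2) := ⟨by linarith [Real.pi_pos], hR⟩
            have hmemR' : -R ∈ Set.Ioo (-(π/2)) (π/2) := ⟨by linarith, by linarith [Real.pi_pos]⟩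
            have hmono := Real.strictMonoOn_tan.monotoneOn
            have hu1 : Real.tan (x - c) ≤ Real.tan R :=
              hmono hmem hmemR (abs_le.1 hxc).2
            have hu2 : Real.tan (-R) ≤ Real.tan (x - c) :=
              hmono hmemR' hmem (by linarith [(abs_le.1 hxc).1])
            rw [Real.tan_neg] at hu2
            exact abs_le.2 ⟨by linarith, hu1⟩
          calc |Real.sin (x-c)| = |Real.tan (x-c)| * Real.cos (x-c) := by
                rw [Real.tan_eq_sin_div_cos, abs_div, abs_of_pos hcosx]; field_simp
            _ ≤ Real.tan R * Real.cos (x-c) := by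
                apply mul_le_mul_of_nonneg_right htan hcosx.le
        calc W x * |Real.sin (x-c)| ≤ W x * (Real.tan R * Real.cos (x-c)) :=
              mul_le_mul_of_nonneg_left hsin hw.le
          _ = Real.tan R * (W x * Real.cos (x-c)) := by ring
      · simp [hgdef, ← hw]
    have h3 : (∫ x in (c-π)..(c+π), |W x * Real.sin (x - c)|)
        ≤ ∫ x in (c-π)..(c+π), Real.tan R * g x := by
      apply intervalIntegral.integral_mono_on (by linarith [Real.pi_pos])
        ((hWc.mul (by continuity)).abs.intervalIntegrable _ _)
        ((continuous_const.mul hgc).intervalIntegrable _ _) h2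
    rw [intervalIntegral.integral_const_mul] at h3
    exact h1.trans h3
  -- conclude
  have hzeta : Complex.exp (-(c:ℂ) * Complex.I) * zI W = (P:ℂ) + (Q:ℂ) * Complex.I := by
    rw [rot hWc hWp c, ← mul_assoc, ← Complex.exp_add,
      show -(c:ℂ)*Complex.I + (c:ℂ)*Complex.I = 0 by ring, Complex.exp_zero, one_mul]
  have hne : ((P:ℂ) + (Q:ℂ) * Complex.I) ≠ 0 := by
    intro h
    have : ((P:ℂ) + (Q:ℂ)*Complex.I).re = 0 := by rw [h]; simp
    simp at this
    linarith
  constructor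
  · intro h
    rw [h, mul_zero] at hzeta
    exact hne hzeta.symm
  · rw [hzeta]
    exact abs_arg_le hP hR0 hR hQb

-- ============ application to f ∈ nbhd r ============

def wt (r : ℝ) (f : C(S1, ℝ)) : ℝ → ℝ := fun x => max (r - f ((x : ℝ) : S1)) 0

def zC (r : ℝ) (f : C(S1, ℝ)) : ℂ := zI (wt r f)

def theta (r : ℝ) (f : C(S1, ℝ)) : S1 := argS1 (zC r f)

lemma wt_cont (r : ℝ) (f : C(S1, ℝ)) : Continuous (wt r f) :=
  ((continuous_const.sub (f.continuous.comp (AddCircle.continuous_mk' _))).max continuous_const)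

lemma wt_periodic (r : ℝ) (f : C(S1, ℝ)) : Function.Periodic (wt r f) (2*π) := by
  intro x
  simp only [wt, AddCircle.coe_add_period (2*π) x]

lemma wt_nonneg (r : ℝ) (f : C(S1, ℝ)) : ∀ x, 0 ≤ wt r f x := fun x => le_max_right _ _

lemma wt_pos_iff {r : ℝ} {f : C(S1, ℝ)} {x : ℝ} : 0 < wt r f x ↔ f ((x : ℝ) : S1) < r := by
  constructor
  · intro h
    rcases lt_max_iff.1 h with h | h
    · linarith
    · exact absurd h (lt_irrefl 0)
  · intro h
    exact lt_max_iff.2 (Or.inl (by linarith))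

lemma pair_bound {f : C(S1, ℝ)} (hL : LipschitzWith 1 ⇑f)
    (hA : ∀ θ : S1, f θ + f (θ + ((π : ℝ) : S1)) = π) (u v : S1) :
    dist u v ≤ f u + f v := by
  have h1 : dist (f v) (f (u + ((π:ℝ):S1))) ≤ dist v (u + ((π:ℝ):S1)) := by
    simpa using hL.dist_le_mul v (u + ((π:ℝ):S1))
  have h2 : f (u + ((π:ℝ):S1)) = π - f u := by linarith [hA u]
  have h3 : dist v (u + ((π:ℝ):S1)) = π - dist v u := dist_antipode v u
  rw [Real.dist_eq] at h1
  have := abs_le.1 (h1.trans_eq h3)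
  rw [dist_comm u v]
  linarith [this.1, this.2]

lemma int_eq_zero_of_abs_lt {k : ℤ} (h : |(k : ℝ)| * (2*π) < 2*π) : k = 0 := by
  have h2 : |(k:ℝ)| < 1 := by
    by_contra hc
    push_neg at hc
    have : 1 * (2*π) ≤ |(k:ℝ)| * (2*π) := by
      apply mul_le_mul_of_nonneg_right hc (by positivity)
    linarith
  have h3 : |k| < 1 := by exact_mod_cast (by rwa [← Int.cast_abs] at h2 : ((|k| : ℤ) : ℝ) < 1)
  exact Int.abs_lt_one_iff.mp h3

/-- The main geometric lemma. -/
lemma main_lemma {r : ℝ} (hr0 : 0 < r) (hr : r ≤ π/3) {f : C(S1, ℝ)} (hf : f ∈ nbhd r) :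
    zC r f ≠ 0 ∧ ∃ φ : S1, f φ < r ∧ dist (theta r f) φ < r := by
  obtain ⟨⟨hL, hA⟩, θ₀, hθ₀⟩ := hf
  obtain ⟨t₀, hrep, _⟩ := exists_rep θ₀ (-π)
  rw [hrep] at hθ₀
  set G : ℝ → ℝ := fun x => f ((x : ℝ) : S1) with hGdef
  set W : ℝ → ℝ := wt r f with hWdef
  have hWc := wt_cont r f
  have hWp := wt_periodic r f
  have hWnn := wt_nonneg r f
  have hpair : ∀ x y : ℝ, dist ((x:ℝ):S1) ((y:ℝ):S1) ≤ G x + G y := fun x y =>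
    pair_bound hL hA _ _
  have hπ : 0 < π := Real.pi_pos
  -- the sublevel set near t₀
  set S' : Set ℝ := {x : ℝ | |x - t₀| ≤ 2*r ∧ G x < r} with hS'def
  have ht₀S' : t₀ ∈ S' := ⟨by rw [sub_self, abs_zero]; positivity, hθ₀⟩
  have hS'ne : S'.Nonempty := ⟨t₀, ht₀S'⟩
  have hbdd_above : BddAbove S' := ⟨t₀ + 2*r, fun x hx => by
    have := abs_le.1 hx.1; linarith [this.2]⟩
  have hbdd_below : BddBelow S' := ⟨t₀ - 2*r, fun x hx => by
    have := abs_le.1 hx.1; linarith [this.1]⟩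
  -- pairwise bound
  have hlam : ∀ x ∈ S', ∀ y ∈ S', |x - y| < 2*r := by
    intro x hx y hy
    have hsum : G x + G y < 2*r := by
      have := hx.2; have := hy.2; linarith
    have hd : dist ((x:ℝ):S1) ((y:ℝ):S1) ≤ G x + G y := hpair x y
    rcases le_or_gt |x - y| π with hle | hgt
    · rw [← dist_coe_eq hle] at *
      linarith
    · exfalso
      have h4r : |x - y| ≤ 4*r := by
        have h1 := abs_le.1 hx.1
        have h2 := abs_le.1 hy.1
        rw [abs_le]
        constructor <;> linarith [h1.1, h1.2, h2.1, h2.2]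
      -- dist = 2π - |x-y|
      have hcoe : dist ((x:ℝ):S1) ((y:ℝ):S1) = ‖((x - y : ℝ) : S1)‖ := by
        rw [dist_eq_norm', ← AddCircle.coe_sub]
      have hnorm : ‖((x - y : ℝ) : S1)‖ = 2*π - |x - y| := by
        have habs : ‖((x - y : ℝ) : S1)‖ = ‖((|x - y| : ℝ) : S1)‖ := by
          rcases abs_choice (x - y) with h | h
          · rw [h]
          · rw [h, AddCircle.coe_neg, norm_neg]
        have e1 : (|x-y| - 2*π) + 2*π = |x-y| := by ring
        have e2 : ((|x-y| : ℝ) : S1) = ((|x-y| - 2*π : ℝ) : S1) := by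
          conv_lhs => rw [← e1]
          rw [AddCircle.coe_add_period]
        rw [habs, e2, norm_coe_eq (by rw [abs_le]; constructor <;> linarith)]
        rw [abs_sub_comm, _root_.abs_of_nonneg (by linarith)]
      rw [hcoe, hnorm] at hd
      have : 2*π - 4*r ≤ 2*π - |x-y| := by linarith
      linarith
  set A := sInf S' with hAdef
  set B := sSup S' with hBdef
  have hmem_AB : ∀ x ∈ S', A ≤ x ∧ x ≤ B := fun x hx =>
    ⟨csInf_le hbdd_below hx, le_csSup hbdd_above hx⟩
  have hAB : A ≤ B := (hmem_AB t₀ ht₀S').1.trans (hmem_AB t₀ ht₀S').2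
  have hBA : B - A ≤ 2*r := by
    have h1 : B ≤ A + 2*r := by
      apply csSup_le hS'ne
      intro y hy
      have h2 : A + 2*r ≥ y := by
        have h3 : ∀ x ∈ S', y - 2*r ≤ x := by
          intro x hx
          have := abs_lt.1 (hlam y hy x hx)
          linarith [this.2]
        have := le_csInf hS'ne h3
        linarith
      linarith
    linarith
  set c := (A+B)/2 with hcdef
  have hmemc : ∀ x ∈ S', |x - c| ≤ (B-A)/2 := by
    intro x hx
    have := hmem_AB x hx
    rw [abs_le]; constructor <;> [linarith [this.1]; linarith [this.2]]
  have hct₀ : |c - t₀| ≤ 2*r := by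
    have h1 := hmem_AB t₀ ht₀S'
    rw [abs_le]; constructor <;> linarith [h1.1, h1.2, hAB]
  -- translation into S'
  have htrans : ∀ x : ℝ, 0 < W x → ∃ k : ℤ, x - (k : ℝ) * (2*π) ∈ S' := by
    intro x hWx
    have hGx : G x < r := wt_pos_iff.1 hWx
    have hd : dist ((x:ℝ):S1) ((t₀:ℝ):S1) ≤ G x + G t₀ := hpair x t₀
    have hd2 : ‖((x - t₀ : ℝ) : S1)‖ ≤ 2*r := by
      rw [AddCircle.coe_sub]
      calc ‖((x:ℝ):S1) - ((t₀:ℝ):S1)‖ = dist ((x:ℝ):S1) ((t₀:ℝ):S1) := (dist_eq_norm' _ _).symm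
        _ ≤ G x + G t₀ := hd
        _ ≤ 2*r := by linarith
    obtain ⟨k, hk⟩ := exists_translate hd2
    refine ⟨k, ?_, ?_⟩
    · rw [show x - (k:ℝ)*(2*π) - t₀ = x - t₀ - 2*π*k by ring]
      exact hk
    · show G (x - (k:ℝ)*(2*π)) < r
      rw [hGdef]
      simp only
      rw [show ((x - (k:ℝ)*(2*π) : ℝ) : S1) = ((x:ℝ) : S1) by
        have := Function.Periodic.sub_int_mul_eq (f := fun y : ℝ => ((y:ℝ):S1))
          (c := 2*π) (x := x) (fun y => AddCircle.coe_add_period (2*π) y) k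
        exact this]
      exact hGx
  -- support condition generator
  have hsupp_gen : ∀ R' : ℝ, 0 ≤ R' → R' ≤ r → (∀ x ∈ S', |x - c| ≤ R') →
      ∀ x, c - π ≤ x → x ≤ c + π → 0 < W x → |x - c| ≤ R' := by
    intro R' hR'0 hR'r hloc x hxl hxr hWx
    obtain ⟨k, hk⟩ := htrans x hWx
    have h1 : |x - (k:ℝ)*(2*π) - c| ≤ R' := hloc _ hk
    have h2 : |x - c| ≤ π := by rw [abs_le]; constructor <;> linarith
    have hk0 : k = 0 := by
      apply int_eq_zero_of_abs_lt
      have : |(k:ℝ)| * (2*π) = |(k:ℝ)*(2*π)| := by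
        rw [abs_mul, _root_.abs_of_pos (by positivity : (0:ℝ) < 2*π)]
      rw [this]
      calc |(k:ℝ)*(2*π)| = |(x - c) - (x - (k:ℝ)*(2*π) - c)| := by ring_nf
        _ ≤ |x - c| + |x - (k:ℝ)*(2*π) - c| := abs_sub _ _
        _ ≤ π + R' := by linarith
        _ < 2*π := by linarith [hr0, hr, hπ]
    rw [hk0] at hk
    simp at hk
    exact hloc x hk
  have hwit : 0 < W t₀ := wt_pos_iff.2 hθ₀
  have ht₀win : c - π < t₀ ∧ t₀ < c + π := by
    have := abs_le.1 hct₀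
    constructor <;> [linarith [this.2]; linarith [this.1]]
  have hRr : (B-A)/2 ≤ r := by linarith
  have hloc_r : ∀ x ∈ S', |x - c| ≤ r := fun x hx => (hmemc x hx).trans hRr
  -- first cone application
  obtain ⟨hz0, harg⟩ := cone hWc hWp hWnn (le_of_lt hr0) (by linarith)
    (hsupp_gen r hr0.le le_rfl hloc_r) ht₀win.1 ht₀win.2 hwit
  set ξ := c + Complex.arg (Complex.exp (-(c:ℂ) * Complex.I) * zI W) with hξdef
  have hθeq : theta r f = ((ξ : ℝ) : S1) := argS1_shift hz0 c
  have hξc : |ξ - c| ≤ r := by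
    rw [hξdef, show c + Complex.arg (Complex.exp (-(c:ℂ) * Complex.I) * zI W) - c
      = Complex.arg (Complex.exp (-(c:ℂ) * Complex.I) * zI W) by ring]
    exact harg
  refine ⟨hz0, ?_⟩
  by_contra hcon
  push_neg at hcon
  -- every point of S' is far from ξ
  have hfar : ∀ x ∈ S', r ≤ |ξ - x| := by
    intro x hx
    have hfx : f ((x:ℝ):S1) < r := hx.2
    have h1 : r ≤ dist (theta r f) ((x:ℝ):S1) := hcon _ hfx
    have h2 : dist (theta r f) ((x:ℝ):S1) ≤ |ξ - x| := by
      rw [hθeq]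
      exact dist_coe_le ξ x
    -- we need equality or at least ≥ direction: use dist_coe_eq
    have h3 : |ξ - x| ≤ π := by
      have h4 : |x - c| ≤ r := hloc_r x hx
      calc |ξ - x| = |(ξ - c) + (c - x)| := by ring_nf
        _ ≤ |ξ - c| + |c - x| := abs_add_le _ _
        _ ≤ r + r := by rw [abs_sub_comm c x]; linarith
        _ ≤ π := by linarith
    rw [hθeq, dist_coe_eq h3] at h1
    exact h1
  -- dichotomy
  have hδt₀ := hfar t₀ ht₀S'
  set R' := (B-A)/2 with hR'def
  obtain ⟨_, harg'⟩ := cone hWc hWp hWnn (by linarith : (0:ℝ) ≤ R') (by linarith)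
    (hsupp_gen R' (by linarith) hRr hmemc) ht₀win.1 ht₀win.2 hwit
  have hξc' : |ξ - c| ≤ R' := by
    rw [hξdef, show c + Complex.arg (Complex.exp (-(c:ℂ) * Complex.I) * zI W) - c
      = Complex.arg (Complex.exp (-(c:ℂ) * Complex.I) * zI W) by ring]
    exact harg'
  have hdich : ∀ y : ℝ, r ≤ |ξ - y| → y ≤ ξ - r ∨ ξ + r ≤ y := by
    intro y hy
    rcases le_abs'.1 hy with h | h
    · right; linarith
    · left; linarith
  rcases hdich t₀ hδt₀ with hcase | hcase
  · -- all of S' is ≤ ξ - r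
    have hall : ∀ y ∈ S', y ≤ ξ - r := by
      intro y hy
      by_contra hyc
      push_neg at hyc
      have h1 : r ≤ |ξ - y| := hfar y hy
      have h2 : ξ + r ≤ y := by
        rcases hdich y h1 with h | h
        · exact absurd h (not_le.2 hyc)
        · exact h
      have h3 := hlam t₀ ht₀S' y hy
      have := abs_lt.1 h3
      linarith [this.2]
    have hBle : B ≤ ξ - r := csSup_le hS'ne hall
    have h1 : ξ - c ≥ r + R' := by
      rw [hcdef, hR'def]; linarith
    have h2 := abs_le.1 hξc'
    linarith [h2.2]
  · -- t₀ > ξ - r hence t₀ ≥ ξ + r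
    have ht₀ge : ξ + r ≤ t₀ := by
      rcases hdich t₀ hδt₀ with h | h
      · linarith
      · exact h
    have hall : ∀ y ∈ S', ξ + r ≤ y := by
      intro y hy
      by_contra hyc
      push_neg at hyc
      have h1 : r ≤ |ξ - y| := hfar y hy
      have h2 : y ≤ ξ - r := by
        rcases hdich y h1 with h | h
        · exact h
        · exact absurd h (not_le.2 hyc)
      have h3 := hlam t₀ ht₀S' y hy
      have := abs_lt.1 h3
      linarith [this.1]
    have hAge : ξ + r ≤ A := le_csInf hS'ne hall
    have h1 : ξ - c ≤ -(r + R') := by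
      rw [hcdef, hR'def]; linarith
    have h2 := abs_le.1 hξc'
    linarith [h2.1]

-- ============ the Kuratowski map and the retraction computation ============

def kur (θ : S1) : C(S1, ℝ) := ⟨fun φ => dist θ φ, continuous_const.dist continuous_id⟩

@[simp] lemma kur_apply (θ φ : S1) : kur θ φ = dist θ φ := rfl

lemma kur_mem {r : ℝ} (hr0 : 0 < r) (θ : S1) : kur θ ∈ nbhd r := by
  refine ⟨⟨LipschitzWith.dist_right θ, fun φ => ?_⟩, θ, by simpa using hr0⟩
  have := dist_antipode θ φ
  simp only [kur_apply]
  linarith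

lemma theta_kur {r : ℝ} (hr0 : 0 < r) (hr : r ≤ π/3) (θ : S1) :
    theta r (kur θ) = θ := by
  obtain ⟨t, hrep, _⟩ := exists_rep θ (-π)
  set W : ℝ → ℝ := wt r (kur θ) with hWdef
  have hπ : 0 < π := Real.pi_pos
  have hWc := wt_cont r (kur θ)
  have hWp := wt_periodic r (kur θ)
  have hWnn := wt_nonneg r (kur θ)
  have hWval : ∀ x : ℝ, W x = max (r - dist θ ((x:ℝ):S1)) 0 := fun x => rfl
  -- support within radius r of t, in the window
  have hsupp : ∀ x, t - π ≤ x → x ≤ t + π → 0 < W x → |x - t| ≤ r := by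
    intro x hxl hxr hWx
    have h1 : dist θ ((x:ℝ):S1) < r := by
      have := wt_pos_iff.1 hWx
      simpa using this
    have h2 : |x - t| ≤ π := by rw [abs_le]; constructor <;> linarith
    rw [hrep, dist_comm, dist_coe_eq h2] at h1
    exact h1.le
  have hwit : 0 < W t := by
    rw [hWval, hrep, dist_comm, dist_coe_eq (by simpa using hπ.le)]
    simp
    linarith
  obtain ⟨hz0, harg⟩ := cone hWc hWp hWnn hr0.le (by linarith) hsupp
    (by linarith : t - π < t) (by linarith : t < t + π) hwit
  -- Q = 0 by symmetry
  have hWsym : ∀ u : ℝ, W (t + u) = W (t - u) := by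
    intro u
    rw [hWval, hWval, hrep]
    congr 2
    have e1 : dist ((t:ℝ):S1) ((t+u : ℝ):S1) = ‖((u:ℝ):S1)‖ := by
      rw [dist_eq_norm', ← AddCircle.coe_sub, show t - (t+u) = -u by ring,
        AddCircle.coe_neg, norm_neg]
    have e2 : dist ((t:ℝ):S1) ((t-u : ℝ):S1) = ‖((u:ℝ):S1)‖ := by
      rw [dist_eq_norm', ← AddCircle.coe_sub, show t - (t-u) = u by ring]
    rw [e1, e2]
  have hQ : (∫ x in (t-π)..(t+π), W x * Real.sin (x-t) : ℝ) = 0 := by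
    have h1 : (∫ x in (t-π)..(t+π), W x * Real.sin (x-t) : ℝ)
        = ∫ u in (-π)..π, W (u + t) * Real.sin u := by
      have := intervalIntegral.integral_comp_sub_right (a := t-π) (b := t+π)
        (fun u => W (u + t) * Real.sin u) t
      rw [show t - π - t = -π by ring, show t + π - t = π by ring] at this
      rw [← this]
      apply intervalIntegral.integral_congr
      intro x _
      simp only
      rw [show x - t + t = x by ring]
    have h2 : (∫ u in (-π)..π, W (u + t) * Real.sin u : ℝ)
        = ∫ u in (-π)..π, W (-u + t) * Real.sin (-u) := by
      have := intervalIntegral.integral_comp_neg (a := -π) (b := π)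
        (fun u => W (u + t) * Real.sin u)
      rw [neg_neg] at this
      rw [← this]
    have h3 : ∀ u : ℝ, W (-u + t) * Real.sin (-u) = -(W (u + t) * Real.sin u) := by
      intro u
      have : W (-u + t) = W (u + t) := by
        rw [show -u + t = t - u by ring, ← hWsym u, show t + u = u + t by ring]
      rw [this, Real.sin_neg]
      ring
    have h4 : (∫ u in (-π)..π, W (-u + t) * Real.sin (-u) : ℝ)
        = -∫ u in (-π)..π, W (u + t) * Real.sin u := by
      rw [intervalIntegral.integral_congr (fun u _ => h3 u), intervalIntegral.integral_neg]
    rw [h1]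
    have := h2.trans h4
    linarith [this]
  -- P is positive
  set P := (∫ x in (t-π)..(t+π), W x * Real.cos (x-t) : ℝ) with hPdef
  have hrot := rot hWc hWp t
  rw [← hPdef, hQ] at hrot
  simp only [Complex.ofReal_zero, zero_mul, add_zero] at hrot
  have hPne : P ≠ 0 := by
    intro h
    apply hz0
    rw [hrot, h]
    simp
  have hexpz : Complex.exp (-(t:ℂ) * Complex.I) * zI W = (P : ℂ) := by
    rw [hrot, ← mul_assoc, ← Complex.exp_add,
      show -(t:ℂ)*Complex.I + (t:ℂ)*Complex.I = 0 by ring, Complex.exp_zero, one_mul]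
  have hPpos : 0 < P := by
    rcases hPne.lt_or_gt with h | h
    · exfalso
      have : Complex.arg ((P:ℂ)) = π := Complex.arg_ofReal_of_neg h
      rw [hexpz, this] at harg
      have : |π| = π := _root_.abs_of_pos hπ
      rw [this] at harg
      linarith
    · exact h
  -- conclude
  have hfin := argS1_shift hz0 t
  calc theta r (kur θ) = argS1 (zI (wt r (kur θ))) := rfl
    _ = θ := by rw [hfin, hexpz, Complex.arg_ofReal_of_nonneg hPpos.le, add_zero, hrep]

-- ============ blending (homotopy) membership ============

lemma combo_mem {r : ℝ} (hr0 : 0 < r) (hr : r ≤ π/3) {f : C(S1,ℝ)} (hf : f ∈ nbhd r)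
    {s : ℝ} (hs0 : 0 ≤ s) (hs1 : s ≤ 1) :
    ((1-s) • kur (theta r f) + s • f) ∈ nbhd r := by
  obtain ⟨⟨hL, hA⟩, -⟩ := id hf
  obtain ⟨-, φ, hφ1, hφ2⟩ := main_lemma hr0 hr hf
  set g := kur (theta r f) with hgdef
  have hgL : LipschitzWith 1 ⇑g := LipschitzWith.dist_right _
  have happ : ∀ ψ : S1, ((1-s) • g + s • f) ψ = (1-s) * g ψ + s * f ψ := fun ψ => by
    simp [ContinuousMap.add_apply, ContinuousMap.smul_apply, smul_eq_mul]
  refine ⟨⟨?_, ?_⟩, φ, ?_⟩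
  · apply LipschitzWith.of_dist_le_mul
    intro ψ χ
    have h1 := hL.dist_le_mul ψ χ
    have h2 := hgL.dist_le_mul ψ χ
    rw [NNReal.coe_one, one_mul] at h1 h2
    rw [NNReal.coe_one, one_mul, Real.dist_eq, happ, happ]
    rw [Real.dist_eq] at h1 h2
    have e1 : (1-s) * g ψ + s * f ψ - ((1-s) * g χ + s * f χ)
        = (1-s) * (g ψ - g χ) + s * (f ψ - f χ) := by ring
    rw [e1]
    calc |(1-s) * (g ψ - g χ) + s * (f ψ - f χ)|
        ≤ |(1-s) * (g ψ - g χ)| + |s * (f ψ - f χ)| := abs_add_le _ _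
      _ = (1-s) * |g ψ - g χ| + s * |f ψ - f χ| := by
          rw [abs_mul, abs_mul, _root_.abs_of_nonneg (by linarith : (0:ℝ) ≤ 1-s),
            _root_.abs_of_nonneg hs0]
      _ ≤ (1-s) * dist ψ χ + s * dist ψ χ := by
          apply add_le_add
          · exact mul_le_mul_of_nonneg_left h2 (by linarith)
          · exact mul_le_mul_of_nonneg_left h1 hs0
      _ = dist ψ χ := by ring
  · intro ψ
    have e1 := happ ψ
    have e2 := happ (ψ + ((π:ℝ):S1))
    have e3 := hA ψ
    have e4 : g ψ + g (ψ + ((π:ℝ):S1)) = π := by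
      have := dist_antipode (theta r f) ψ
      simp only [hgdef, kur_apply]
      linarith
    rw [e1, e2]
    nlinarith [e3, e4]
  · rw [happ]
    have hd : g φ < r := by simpa [hgdef] using hφ2
    rcases lt_or_eq_of_le hs1 with h | h
    · nlinarith [mul_pos (by linarith : (0:ℝ) < 1-s) (by linarith : (0:ℝ) < r - g φ),
        mul_nonneg hs0 (by linarith : (0:ℝ) ≤ r - f φ)]
    · rw [h]; simpa using hφ1

-- ============ continuity ============

lemma abs_wt_sub_le (r : ℝ) (f g : C(S1,ℝ)) (x : ℝ) :
    |wt r f x - wt r g x| ≤ dist f g := by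
  have h1 : |wt r f x - wt r g x| ≤ |(r - f ((x:ℝ):S1)) - (r - g ((x:ℝ):S1))| :=
    abs_max_sub_max_le_abs _ _ _
  have h2 : (r - f ((x:ℝ):S1)) - (r - g ((x:ℝ):S1)) = -(f ((x:ℝ):S1) - g ((x:ℝ):S1)) := by ring
  rw [h2, abs_neg] at h1
  calc |wt r f x - wt r g x| ≤ |f ((x:ℝ):S1) - g ((x:ℝ):S1)| := h1
    _ = dist (f ((x:ℝ):S1)) (g ((x:ℝ):S1)) := (Real.dist_eq _ _).symm
    _ ≤ dist f g := ContinuousMap.dist_apply_le_dist _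

lemma zC_dist (r : ℝ) (f g : C(S1,ℝ)) :
    ‖zC r f - zC r g‖ ≤ 4*π * dist f g := by
  have hπ := Real.pi_pos
  have key : ∀ (tr : ℝ → ℝ), Continuous tr → (∀ x, |tr x| ≤ 1) →
      |(∫ x in (0:ℝ)..2*π, wt r f x * tr x) - ∫ x in (0:ℝ)..2*π, wt r g x * tr x|
        ≤ dist f g * (2*π) := by
    intro tr htr htr1
    have hsub : (∫ x in (0:ℝ)..2*π, wt r f x * tr x) - (∫ x in (0:ℝ)..2*π, wt r g x * tr x)
        = ∫ x in (0:ℝ)..2*π, (wt r f x * tr x - wt r g x * tr x) := by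
      rw [intervalIntegral.integral_sub (f := fun x => wt r f x * tr x) (g := fun x => wt r g x * tr x) (((wt_cont r f).mul htr).intervalIntegrable _ _)
        (((wt_cont r g).mul htr).intervalIntegrable _ _)]
    rw [hsub]
    have := intervalIntegral.norm_integral_le_of_norm_le_const
      (a := (0:ℝ)) (b := 2*π) (C := dist f g)
      (f := fun x => wt r f x * tr x - wt r g x * tr x) ?_
    · rw [Real.norm_eq_abs] at this
      calc |∫ x in (0:ℝ)..2*π, (wt r f x * tr x - wt r g x * tr x)|
          ≤ dist f g * |2*π - 0| := this
        _ = dist f g * (2*π) := by rw [sub_zero, _root_.abs_of_pos (by positivity)]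
    · intro x _
      rw [Real.norm_eq_abs]
      calc |wt r f x * tr x - wt r g x * tr x| = |wt r f x - wt r g x| * |tr x| := by
            rw [← abs_mul]; ring_nf
        _ ≤ dist f g * 1 := by
            apply mul_le_mul (abs_wt_sub_le r f g x) (htr1 x) (abs_nonneg _) dist_nonneg
        _ = dist f g := mul_one _
  have h1 := key Real.cos Real.continuous_cos (fun x => by
    rw [abs_le]; exact ⟨Real.neg_one_le_cos x, Real.cos_le_one x⟩)
  have h2 := key Real.sin Real.continuous_sin (fun x => by
    rw [abs_le]; exact ⟨Real.neg_one_le_sin x, Real.sin_le_one x⟩)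
  have hz : zC r f - zC r g
      = (((∫ x in (0:ℝ)..2*π, wt r f x * Real.cos x) - ∫ x in (0:ℝ)..2*π, wt r g x * Real.cos x : ℝ) : ℂ)
        + (((∫ x in (0:ℝ)..2*π, wt r f x * Real.sin x) - ∫ x in (0:ℝ)..2*π, wt r g x * Real.sin x : ℝ) : ℂ) * Complex.I := by
    rw [zC, zC, zI, zI]
    push_cast
    ring
  rw [hz]
  calc ‖_‖ ≤ ‖(((∫ x in (0:ℝ)..2*π, wt r f x * Real.cos x)
          - ∫ x in (0:ℝ)..2*π, wt r g x * Real.cos x : ℝ) : ℂ)‖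
        + ‖(((∫ x in (0:ℝ)..2*π, wt r f x * Real.sin x)
          - ∫ x in (0:ℝ)..2*π, wt r g x * Real.sin x : ℝ) : ℂ) * Complex.I‖ :=
      norm_add_le _ _
    _ ≤ dist f g * (2*π) + dist f g * (2*π) := by
        rw [norm_mul, Complex.norm_I, mul_one, Complex.norm_real, Complex.norm_real, Real.norm_eq_abs, Real.norm_eq_abs]
        exact add_le_add h1 h2
    _ = 4*π * dist f g := by ring

lemma theta_cont {r : ℝ} (hr0 : 0 < r) (hr : r ≤ π/3) :
    Continuous (fun b : ↥(nbhd r) => theta r (b : C(S1,ℝ))) := by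
  have hπ := Real.pi_pos
  have hzc : Continuous (fun h : C(S1,ℝ) => zC r h) := by
    have hlip : LipschitzWith ((4*π).toNNReal) (fun h : C(S1,ℝ) => zC r h) := by
      apply LipschitzWith.of_dist_le_mul
      intro h1 h2
      rw [Complex.dist_eq]
      have hc : (((4*π).toNNReal) : ℝ) = 4*π := Real.coe_toNNReal _ (by positivity)
      rw [hc]
      exact zC_dist r h1 h2
    exact hlip.continuous
  rw [continuous_iff_continuousAt]
  intro b
  have h1 : ContinuousAt (fun z : ℂ => ((Complex.arg z : ℝ) : S1)) (zC r (b : C(S1,ℝ))) :=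
    Complex.continuousAt_arg_coe_angle (main_lemma hr0 hr b.2).1
  have hinner : ContinuousAt (fun b : ↥(nbhd r) => zC r (b : C(S1,ℝ))) b :=
    (hzc.comp continuous_subtype_val).continuousAt
  exact Filter.Tendsto.comp h1 hinner

def kurK : C(S1, C(S1, ℝ)) := ContinuousMap.curry ⟨fun p : S1 × S1 => dist p.1 p.2, continuous_dist⟩

lemma kurK_eq : ∀ θ : S1, kurK θ = kur θ := fun θ => by ext φ; rfl

lemma kur_cont : Continuous (fun θ : S1 => kur θ) := by
  have : (fun θ : S1 => kur θ) = fun θ => kurK θ := funext fun θ => (kurK_eq θ).symm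
  rw [this]
  exact kurK.continuous

-- ============ the maps and the homotopy ============

def Theta (r : ℝ) (hr0 : 0 < r) (hr : r ≤ π/3) : C(↥(nbhd r), S1) :=
  ⟨fun b => theta r (b : C(S1,ℝ)), theta_cont hr0 hr⟩

def Kmap (r : ℝ) (hr0 : 0 < r) : C(S1, ↥(nbhd r)) :=
  ⟨fun θ => ⟨kur θ, kur_mem hr0 θ⟩, kur_cont.subtype_mk _⟩

def rho (r : ℝ) (hr0 : 0 < r) (hr : r ≤ π/3) : C(↥(nbhd r), ↥(nbhd r)) :=
  (Kmap r hr0).comp (Theta r hr0 hr)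

def Hty (r : ℝ) (hr0 : 0 < r) (hr : r ≤ π/3) :
    ContinuousMap.Homotopy (rho r hr0 hr) (ContinuousMap.id ↥(nbhd r)) := by
  refine ⟨⟨fun p => ⟨(1-(p.1:ℝ)) • kur (theta r (p.2 : C(S1,ℝ))) + (p.1:ℝ) • (p.2 : C(S1,ℝ)),
    combo_mem hr0 hr p.2.2 p.1.2.1 p.1.2.2⟩, ?_⟩, ?_, ?_⟩
  · apply Continuous.subtype_mk
    have ht : Continuous (fun p : unitInterval × ↥(nbhd r) => ((p.1 : ℝ))) :=
      continuous_subtype_val.comp continuous_fst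
    have hth : Continuous (fun p : unitInterval × ↥(nbhd r) => kur (theta r (p.2 : C(S1,ℝ)))) :=
      kur_cont.comp ((theta_cont hr0 hr).comp continuous_snd)
    have hval : Continuous (fun p : unitInterval × ↥(nbhd r) => (p.2 : C(S1,ℝ))) :=
      continuous_subtype_val.comp continuous_snd
    exact ((continuous_const.sub ht).smul hth).add (ht.smul hval)
  · intro b
    apply Subtype.ext
    show (1-((0:unitInterval):ℝ)) • kur (theta r (b : C(S1,ℝ))) + ((0:unitInterval):ℝ) • (b : C(S1,ℝ))
      = (rho r hr0 hr b : C(S1,ℝ))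
    simp [rho, Kmap, Theta]
  · intro b
    apply Subtype.ext
    show (1-((1:unitInterval):ℝ)) • kur (theta r (b : C(S1,ℝ))) + ((1:unitInterval):ℝ) • (b : C(S1,ℝ))
      = (b : C(S1,ℝ))
    simp

lemma theta_comp_kur {r : ℝ} (hr0 : 0 < r) (hr : r ≤ π/3) :
    (Theta r hr0 hr).comp (Kmap r hr0) = ContinuousMap.id S1 := by
  ext θ
  exact theta_kur hr0 hr θ

end NB


open NB in
/-- For every `r ∈ (0, π/3]`, the open `r`-neighborhood of the Kuratowski image of
`S¹` in `E(S¹)` is homotopy equivalent to `S¹`; in fact the Kuratowski image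
`{d(θ, ·) : θ ∈ S¹}` is a deformation retract of it. -/
theorem nbhd_homotopyEquiv_circle (r : ℝ) (hr0 : 0 < r) (hr : r ≤ Real.pi / 3) :
    Nonempty (ContinuousMap.HomotopyEquiv ↥(nbhd r) S1) ∧
    ∃ ρ : C(↥(nbhd r), ↥(nbhd r)),
      (∀ b : ↥(nbhd r), ∃ θ : S1, ⇑(ρ b).1 = fun φ : S1 => dist θ φ) ∧
      (∀ b : ↥(nbhd r), (∃ θ : S1, ⇑b.1 = fun φ : S1 => dist θ φ) → ρ b = b) ∧
      ρ.Homotopic (ContinuousMap.id ↥(nbhd r)) := by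
  constructor
  · exact ⟨⟨Theta r hr0 hr, Kmap r hr0, ⟨Hty r hr0 hr⟩,
      theta_comp_kur hr0 hr ▸ ContinuousMap.Homotopic.refl _⟩⟩
  · refine ⟨rho r hr0 hr, fun b => ⟨theta r b.1, rfl⟩, ?_, ⟨Hty r hr0 hr⟩⟩
    rintro b ⟨θ, hθ⟩
    have hb : b.1 = kur θ := ContinuousMap.coe_injective (by rw [hθ]; rfl)
    apply Subtype.ext
    show kur (theta r b.1) = b.1
    rw [hb, theta_kur hr0 hr θ]

end
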